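/- Let $S$ be a set of $n$ points in the plane and $L$ a line containing exactly $\ell$ points of $S$; set $x = n - \ell$. Then the number of unit-area triangles of $S$ with exactly two vertices on $L$ is at most $\ell x$, and the number with exactly one vertex on $L$ is at most $x^2 + \ell x$. -/

import Mathlib

/-- Twice the signed area: the determinant of two planar vectors. -/
def det2 (u v : Fin 2 → ℝ) : ℝ := u 0 * v 1 - u 1 * v 0

/-- `T` is a unit-area triangle with vertices in the plane. -/
def IsUnitTriangle (T : Set (Fin 2 → ℝ)) : Prop :=
  ∃ a b c : Fin 2 → ℝ, a ≠ b ∧ a ≠ c ∧ b ≠ c ∧ T = {a, b, c} ∧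
    |det2 (b - a) (c - a)| / 2 = 1

section Aux

lemma det2_eq_zero_iff {u : Fin 2 → ℝ} (hu : u ≠ 0) (v : Fin 2 → ℝ) :
    det2 u v = 0 ↔ ∃ t : ℝ, v = t • u := by
  constructor
  · intro h
    have hu' : u 0 ≠ 0 ∨ u 1 ≠ 0 := by
      by_contra hc
      push_neg at hc
      exact hu (funext fun i => by fin_cases i <;> simp [hc.1, hc.2])
    rcases hu' with h0 | h1
    · refine ⟨v 0 / u 0, funext fun i => ?_⟩
      fin_cases i <;> simp [det2] at h ⊢ <;> field_simp <;> nlinarith [h]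
    · refine ⟨v 1 / u 1, funext fun i => ?_⟩
      fin_cases i <;> simp [det2] at h ⊢ <;> field_simp <;> nlinarith [h]
  · rintro ⟨t, rfl⟩
    simp [det2]; ring

lemma ncard_sprod {α β : Type*} (s : Set α) (t : Set β) :
    (s ×ˢ t).ncard = s.ncard * t.ncard := by
  rw [← Nat.card_coe_set_eq, ← Nat.card_coe_set_eq, ← Nat.card_coe_set_eq,
    Nat.card_congr (Equiv.Set.prod s t), Nat.card_prod]

lemma collinear_det (p q c : Fin 2 → ℝ) (hpq : p ≠ q) :
    Collinear ℝ ({p, q, c} : Set (Fin 2 → ℝ)) ↔ det2 (q - p) (c - p) = 0 := by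
  have hd : q - p ≠ 0 := sub_ne_zero_of_ne (Ne.symm hpq)
  rw [collinear_iff_of_mem (Set.mem_insert p {q, c})]
  constructor
  · rintro ⟨v, hv⟩
    obtain ⟨r₁, hq⟩ := hv q (by simp)
    obtain ⟨r₂, hc⟩ := hv c (by simp)
    have h1 : q - p = r₁ • v := by rw [hq]; simp [vadd_eq_add]
    have h2 : c - p = r₂ • v := by rw [hc]; simp [vadd_eq_add]
    rw [h1, h2]
    simp only [det2, Pi.smul_apply, smul_eq_mul]; ring
  · intro h
    obtain ⟨t, ht⟩ := (det2_eq_zero_iff hd _).1 h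
    refine ⟨q - p, ?_⟩
    rintro r hr
    rcases hr with rfl | rfl | rfl
    · exact ⟨0, by simp [vadd_eq_add]⟩
    · exact ⟨1, by simp [vadd_eq_add]⟩
    · exact ⟨t, by rw [← ht]; simp [vadd_eq_add]⟩

lemma det2_smul_pair (t : ℝ) (d v : Fin 2 → ℝ) : det2 (t • d) v = t * det2 d v := by
  simp only [det2, Pi.smul_apply, smul_eq_mul]; ring

lemma det2_shift (d c pp : Fin 2 → ℝ) (s : ℝ) :
    det2 d (c - (pp + s • d)) = det2 d (c - pp) := by
  simp only [det2, Pi.sub_apply, Pi.add_apply, Pi.smul_apply, smul_eq_mul]; ring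

/-- Surjection target function for triangles with two vertices on the line. -/
noncomputable def gone (p d : Fin 2 → ℝ) (ca : (Fin 2 → ℝ) × (Fin 2 → ℝ)) :
    Set (Fin 2 → ℝ) :=
  {ca.2, ca.2 + (2 / |det2 d (ca.1 - p)|) • d, ca.1}

/-- Surjection target function for triangles with one vertex on the line. -/
noncomputable def gtwo (p d : Fin 2 → ℝ) (uv : (Fin 2 → ℝ) × (Fin 2 → ℝ)) :
    Set (Fin 2 → ℝ) :=
  if det2 d (uv.2 - p) = 0 then {uv.2, uv.1, uv.1 + (2 / |det2 d (uv.1 - p)|) • d}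
  else {uv.1, uv.2,
    p + ((2 - det2 (uv.2 - uv.1) (p - uv.1)) / det2 (uv.2 - uv.1) d) • d}

lemma case2_exists (p d : Fin 2 → ℝ) (hd : d ≠ 0) (L : Set (Fin 2 → ℝ))
    (hLiff : ∀ z, z ∈ L ↔ det2 d (z - p) = 0)
    (a b c : Fin 2 → ℝ) (haL : a ∈ L) (hbL : b ∈ L) (hcL : c ∉ L)
    (hab : a ≠ b) (harea : |det2 (b - a) (c - a)| = 2) :
    ∃ a', (a' = a ∨ a' = b) ∧ gone p d (c, a') = {a, b, c} := by
  obtain ⟨s, hs⟩ := (det2_eq_zero_iff hd _).1 ((hLiff a).1 haL)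
  obtain ⟨t, ht⟩ := (det2_eq_zero_iff hd _).1 ((hLiff b).1 hbL)
  have ha' : a = p + s • d := by rw [← hs]; abel
  have hb' : b = p + t • d := by rw [← ht]; abel
  set e := det2 d (c - p) with he
  have hce : e ≠ 0 := fun h => hcL ((hLiff c).2 h)
  have hba : b - a = (t - s) • d := by
    rw [ha', hb']; funext i
    simp only [Pi.sub_apply, Pi.add_apply, Pi.smul_apply, smul_eq_mul]; ring
  have hdet : det2 (b - a) (c - a) = (t - s) * e := by
    rw [hba, det2_smul_pair, ha', det2_shift]
  have habs : |t - s| * |e| = 2 := by rw [← abs_mul, ← hdet, harea]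
  have hts : t ≠ s := by
    intro h; apply hab; rw [ha', hb', h]
  have hepos : (0:ℝ) < |e| := abs_pos.2 hce
  rcases lt_or_gt_of_ne hts with hlt | hgt
  · -- t < s : a = b + (2/|e|) • d, use a' = b
    have hdelta : s - t = 2 / |e| := by
      rw [abs_sub_comm, abs_of_pos (by linarith)] at habs
      field_simp at habs ⊢; linarith
    refine ⟨b, Or.inr rfl, ?_⟩
    have hba2 : b + (2 / |e|) • d = a := by
      rw [← hdelta, ha', hb']; funext i
      simp only [Pi.add_apply, Pi.smul_apply, smul_eq_mul, Pi.sub_apply]; ring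
    rw [gone]; simp only
    rw [← he, hba2]
    ext z; simp only [Set.mem_insert_iff, Set.mem_singleton_iff]; tauto
  · -- s < t : b = a + (2/|e|) • d, use a' = a
    have hdelta : t - s = 2 / |e| := by
      rw [abs_of_pos (by linarith)] at habs
      field_simp at habs ⊢; linarith
    refine ⟨a, Or.inl rfl, ?_⟩
    have hab2 : a + (2 / |e|) • d = b := by
      rw [← hdelta, ha', hb']; funext i
      simp only [Pi.add_apply, Pi.smul_apply, smul_eq_mul, Pi.sub_apply]; ring
    rw [gone]; simp only
    rw [← he, hab2]

lemma third_point (p d a u v : Fin 2 → ℝ) (s : ℝ) (ha : a = p + s • d)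
    (hnd : det2 (v - u) d ≠ 0) (hval : det2 (v - u) (a - u) = 2) :
    p + ((2 - det2 (v - u) (p - u)) / det2 (v - u) d) • d = a := by
  have hexp : det2 (v - u) (a - u) = det2 (v - u) (p - u) + s * det2 (v - u) d := by
    rw [ha]; simp only [det2, Pi.sub_apply, Pi.add_apply, Pi.smul_apply, smul_eq_mul]; ring
  have hs : (2 - det2 (v - u) (p - u)) / det2 (v - u) d = s := by
    rw [hexp] at hval; field_simp; linarith
  rw [hs, ← ha]

lemma case1_exists (p d : Fin 2 → ℝ) (hd : d ≠ 0) (L : Set (Fin 2 → ℝ))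
    (hLiff : ∀ z, z ∈ L ↔ det2 d (z - p) = 0)
    (a b c : Fin 2 → ℝ) (haL : a ∈ L) (hbL : b ∉ L) (hcL : c ∉ L)
    (hbc : b ≠ c) (harea : |det2 (b - a) (c - a)| = 2) :
    ∃ u v : Fin 2 → ℝ, (u = b ∨ u = c) ∧ (v = b ∨ v = c ∨ v = a) ∧
      gtwo p d (u, v) = {a, b, c} := by
  obtain ⟨s, hs⟩ := (det2_eq_zero_iff hd _).1 ((hLiff a).1 haL)
  have ha' : a = p + s • d := by rw [← hs]; abel
  have haz : det2 d (a - p) = 0 := (hLiff a).1 haL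
  have heb : det2 d (b - p) ≠ 0 := fun h => hbL ((hLiff b).2 h)
  have hec : det2 d (c - p) ≠ 0 := fun h => hcL ((hLiff c).2 h)
  by_cases hpar : det2 d (c - b) = 0
  · -- parallel case
    obtain ⟨t, ht⟩ := (det2_eq_zero_iff hd _).1 hpar
    have hc' : c = b + t • d := by rw [← ht]; abel
    have htne : t ≠ 0 := by
      intro h; apply hbc; rw [hc', h]; funext i; simp
    have hdet : det2 (b - a) (c - a) = -t * det2 d (b - p) := by
      rw [ha', hc']
      simp only [det2, Pi.sub_apply, Pi.add_apply, Pi.smul_apply, smul_eq_mul]; ring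
    have hebc : det2 d (c - p) = det2 d (b - p) := by
      rw [hc']
      simp only [det2, Pi.sub_apply, Pi.add_apply, Pi.smul_apply, smul_eq_mul]; ring
    have habs : |t| * |det2 d (b - p)| = 2 := by
      have : |det2 (b - a) (c - a)| = |t| * |det2 d (b - p)| := by
        rw [hdet, abs_mul, abs_neg]
      linarith [harea, this]
    have hbpos : (0:ℝ) < |det2 d (b - p)| := abs_pos.2 heb
    rcases (Ne.lt_or_gt htne) with hneg | hpos
    · -- t < 0 : use (c, a)
      refine ⟨c, a, Or.inr rfl, Or.inr (Or.inr rfl), ?_⟩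
      rw [gtwo, if_pos haz]
      have hteq : -t = 2 / |det2 d (c - p)| := by
        rw [hebc]
        rw [abs_of_neg hneg] at habs
        field_simp at habs ⊢; linarith
      have hbeq : c + (2 / |det2 d (c - p)|) • d = b := by
        rw [← hteq, hc']; funext i
        simp only [Pi.add_apply, Pi.smul_apply, smul_eq_mul, Pi.neg_apply]; ring
      rw [hbeq]
      ext z; simp only [Set.mem_insert_iff, Set.mem_singleton_iff]; tauto
    · -- t > 0 : use (b, a)
      refine ⟨b, a, Or.inl rfl, Or.inr (Or.inr rfl), ?_⟩
      rw [gtwo, if_pos haz]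
      have hteq : t = 2 / |det2 d (b - p)| := by
        rw [abs_of_pos hpos] at habs
        field_simp at habs ⊢; linarith
      have hceq : b + (2 / |det2 d (b - p)|) • d = c := by
        rw [← hteq, ← hc']
      rw [hceq]
  · -- non-parallel case
    have hD : det2 (b - a) (c - a) = 2 ∨ det2 (b - a) (c - a) = -2 :=
      (abs_eq (by norm_num : (0:ℝ) ≤ 2)).1 harea
    rcases hD with hD | hD
    · refine ⟨b, c, Or.inl rfl, Or.inr (Or.inl rfl), ?_⟩
      rw [gtwo, if_neg hec]
      have hnd : det2 (c - b) d ≠ 0 := by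
        intro h; apply hpar
        simp only [det2, Pi.sub_apply] at h ⊢; linarith
      have hval : det2 (c - b) (a - b) = 2 := by
        rw [← hD]; simp only [det2, Pi.sub_apply]; ring
      have h3 := third_point p d a b c s ha' hnd hval
      simp only at h3 ⊢
      rw [h3]
      ext z; simp only [Set.mem_insert_iff, Set.mem_singleton_iff]; tauto
    · refine ⟨c, b, Or.inr rfl, Or.inl rfl, ?_⟩
      rw [gtwo, if_neg heb]
      have hnd : det2 (b - c) d ≠ 0 := by
        intro h; apply hpar
        simp only [det2, Pi.sub_apply] at h ⊢; linarith
      have hval : det2 (b - c) (a - c) = 2 := by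
        rw [show (2:ℝ) = -(-2) by norm_num, ← hD]
        simp only [det2, Pi.sub_apply]; ring
      have h3 := third_point p d a c b s ha' hnd hval
      simp only at h3 ⊢
      rw [h3]
      ext z; simp only [Set.mem_insert_iff, Set.mem_singleton_iff]; tauto

lemma ncard_triple {α : Type*} {a b c : α} (hab : a ≠ b) (hac : a ≠ c) (hbc : b ≠ c) :
    ({a, b, c} : Set α).ncard = 3 := by
  rw [Set.ncard_insert_of_notMem (by simp [hab, hac]), Set.ncard_pair hbc]

lemma pattern2 {α : Type*} {a b c : α} {L : Set α} (hab : a ≠ b) (hac : a ≠ c) (hbc : b ≠ c)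
    (h : (({a, b, c} : Set α) ∩ L).ncard = 2) :
    (a ∈ L ∧ b ∈ L ∧ c ∉ L) ∨ (a ∈ L ∧ c ∈ L ∧ b ∉ L) ∨ (b ∈ L ∧ c ∈ L ∧ a ∉ L) := by
  by_cases ha : a ∈ L <;> by_cases hb : b ∈ L <;> by_cases hc : c ∈ L
  · exfalso
    rw [show ({a,b,c} : Set α) ∩ L = {a,b,c} from Set.inter_eq_left.2
      (by rintro z (rfl | rfl | rfl) <;> assumption), ncard_triple hab hac hbc] at h
    omega
  · exact Or.inl ⟨ha, hb, hc⟩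
  · exact Or.inr (Or.inl ⟨ha, hc, hb⟩)
  · exfalso
    rw [show ({a,b,c} : Set α) ∩ L = {a} by
      ext z
      simp only [Set.mem_inter_iff, Set.mem_insert_iff, Set.mem_singleton_iff]
      constructor
      · rintro ⟨rfl | rfl | rfl, hz⟩ <;> tauto
      · rintro rfl; tauto, Set.ncard_singleton] at h
    omega
  · exact Or.inr (Or.inr ⟨hb, hc, ha⟩)
  · exfalso
    rw [show ({a,b,c} : Set α) ∩ L = {b} by
      ext z
      simp only [Set.mem_inter_iff, Set.mem_insert_iff, Set.mem_singleton_iff]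
      constructor
      · rintro ⟨rfl | rfl | rfl, hz⟩ <;> tauto
      · rintro rfl; tauto, Set.ncard_singleton] at h
    omega
  · exfalso
    rw [show ({a,b,c} : Set α) ∩ L = {c} by
      ext z
      simp only [Set.mem_inter_iff, Set.mem_insert_iff, Set.mem_singleton_iff]
      constructor
      · rintro ⟨rfl | rfl | rfl, hz⟩ <;> tauto
      · rintro rfl; tauto, Set.ncard_singleton] at h
    omega
  · exfalso
    rw [show ({a,b,c} : Set α) ∩ L = ∅ by
      ext z
      simp only [Set.mem_inter_iff, Set.mem_insert_iff, Set.mem_singleton_iff,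
        Set.mem_empty_iff_false]
      constructor
      · rintro ⟨rfl | rfl | rfl, hz⟩ <;> tauto
      · exact False.elim, Set.ncard_empty] at h
    omega

lemma pattern1 {α : Type*} {a b c : α} {L : Set α} (hab : a ≠ b) (hac : a ≠ c) (hbc : b ≠ c)
    (h : (({a, b, c} : Set α) ∩ L).ncard = 1) :
    (a ∈ L ∧ b ∉ L ∧ c ∉ L) ∨ (b ∈ L ∧ a ∉ L ∧ c ∉ L) ∨ (c ∈ L ∧ a ∉ L ∧ b ∉ L) := by
  by_cases ha : a ∈ L <;> by_cases hb : b ∈ L <;> by_cases hc : c ∈ L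
  · exfalso
    rw [show ({a,b,c} : Set α) ∩ L = {a,b,c} from Set.inter_eq_left.2
      (by rintro z (rfl | rfl | rfl) <;> assumption), ncard_triple hab hac hbc] at h
    omega
  · exfalso
    rw [show ({a,b,c} : Set α) ∩ L = {a,b} by
      ext z
      simp only [Set.mem_inter_iff, Set.mem_insert_iff, Set.mem_singleton_iff]
      constructor
      · rintro ⟨rfl | rfl | rfl, hz⟩ <;> tauto
      · rintro (rfl | rfl) <;> tauto, Set.ncard_pair hab] at h
    omega
  · exfalso
    rw [show ({a,b,c} : Set α) ∩ L = {a,c} by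
      ext z
      simp only [Set.mem_inter_iff, Set.mem_insert_iff, Set.mem_singleton_iff]
      constructor
      · rintro ⟨rfl | rfl | rfl, hz⟩ <;> tauto
      · rintro (rfl | rfl) <;> tauto, Set.ncard_pair hac] at h
    omega
  · exact Or.inl ⟨ha, hb, hc⟩
  · exfalso
    rw [show ({a,b,c} : Set α) ∩ L = {b,c} by
      ext z
      simp only [Set.mem_inter_iff, Set.mem_insert_iff, Set.mem_singleton_iff]
      constructor
      · rintro ⟨rfl | rfl | rfl, hz⟩ <;> tauto
      · rintro (rfl | rfl) <;> tauto, Set.ncard_pair hbc] at h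
    omega
  · exact Or.inr (Or.inl ⟨hb, ha, hc⟩)
  · exact Or.inr (Or.inr ⟨hc, ha, hb⟩)
  · exfalso
    rw [show ({a,b,c} : Set α) ∩ L = ∅ by
      ext z
      simp only [Set.mem_inter_iff, Set.mem_insert_iff, Set.mem_singleton_iff,
        Set.mem_empty_iff_false]
      constructor
      · rintro ⟨rfl | rfl | rfl, hz⟩ <;> tauto
      · exact False.elim, Set.ncard_empty] at h
    omega

end Aux

set_option maxHeartbeats 1000000 in
/-- if a line `L` contains exactly `ℓ` points of an `n`-point
planar set `S` and `x = n - ℓ`, then at most `ℓ·x` unit-area triangles of `S`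
have exactly two vertices on `L`, and at most `x² + ℓ·x` have exactly one
vertex on `L`. -/
theorem stmt6 (S : Set (Fin 2 → ℝ)) (hS : S.Finite) (n : ℕ) (hn : S.ncard = n)
    (p q : Fin 2 → ℝ) (hpq : p ≠ q)
    (L : Set (Fin 2 → ℝ)) (hL : L = {x | Collinear ℝ {p, q, x}})
    (ℓ x : ℕ) (hl : (S ∩ L).ncard = ℓ) (hx : x = n - ℓ) :
    {T : Set (Fin 2 → ℝ) | T ⊆ S ∧ IsUnitTriangle T ∧ (T ∩ L).ncard = 2}.ncard
      ≤ ℓ * x ∧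
    {T : Set (Fin 2 → ℝ) | T ⊆ S ∧ IsUnitTriangle T ∧ (T ∩ L).ncard = 1}.ncard
      ≤ x ^ 2 + ℓ * x := by
  classical
  set d := q - p with hd_def
  have hd : d ≠ 0 := sub_ne_zero_of_ne (Ne.symm hpq)
  have hLiff : ∀ z, z ∈ L ↔ det2 d (z - p) = 0 := by
    intro z
    rw [hL]
    simp only [Set.mem_setOf_eq]
    exact collinear_det p q z hpq
  have hSL : (S ∩ L).ncard + (S \ L).ncard = S.ncard :=
    Set.ncard_inter_add_ncard_diff_eq_ncard S L hS
  have hln : ℓ ≤ n := by omega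
  have hxval : (S \ L).ncard = x := by omega
  have hfinD : (S \ L).Finite := hS.diff
  have hfinI : (S ∩ L).Finite := hS.inter_of_left L
  constructor
  · -- two vertices on L
    have hsub : {T : Set (Fin 2 → ℝ) | T ⊆ S ∧ IsUnitTriangle T ∧ (T ∩ L).ncard = 2}
        ⊆ gone p d '' ((S \ L) ×ˢ (S ∩ L)) := by
      rintro T ⟨hTS, ⟨a, b, c, hab, hac, hbc, hTeq, harea'⟩, hcard⟩
      have harea : |det2 (b - a) (c - a)| = 2 := by linarith
      rw [hTeq] at hTS hcard
      have haS : a ∈ S := hTS (by simp)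
      have hbS : b ∈ S := hTS (by simp)
      have hcS : c ∈ S := hTS (by simp)
      rcases pattern2 hab hac hbc hcard with ⟨h1, h2, h3⟩ | ⟨h1, h2, h3⟩ | ⟨h1, h2, h3⟩
      · obtain ⟨a', ha'or, hset⟩ := case2_exists p d hd L hLiff a b c h1 h2 h3 hab harea
        refine ⟨(c, a'), ⟨⟨hcS, h3⟩, ?_⟩, ?_⟩
        · rcases ha'or with rfl | rfl
          exacts [⟨haS, h1⟩, ⟨hbS, h2⟩]
        · rw [hset, hTeq]
      · -- a, c ∈ L, b ∉ L
        have harea2 : |det2 (c - a) (b - a)| = 2 := by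
          rw [show det2 (c - a) (b - a) = -det2 (b - a) (c - a) by
            simp only [det2, Pi.sub_apply]; ring, abs_neg]
          exact harea
        obtain ⟨a', ha'or, hset⟩ := case2_exists p d hd L hLiff a c b h1 h2 h3 hac harea2
        refine ⟨(b, a'), ⟨⟨hbS, h3⟩, ?_⟩, ?_⟩
        · rcases ha'or with rfl | rfl
          exacts [⟨haS, h1⟩, ⟨hcS, h2⟩]
        · rw [hset, hTeq]
          ext z; simp only [Set.mem_insert_iff, Set.mem_singleton_iff]; tauto
      · -- b, c ∈ L, a ∉ L
        have harea2 : |det2 (c - b) (a - b)| = 2 := by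
          rw [show det2 (c - b) (a - b) = det2 (b - a) (c - a) by
            simp only [det2, Pi.sub_apply]; ring]
          exact harea
        obtain ⟨a', ha'or, hset⟩ := case2_exists p d hd L hLiff b c a h1 h2 h3 hbc harea2
        refine ⟨(a, a'), ⟨⟨haS, h3⟩, ?_⟩, ?_⟩
        · rcases ha'or with rfl | rfl
          exacts [⟨hbS, h1⟩, ⟨hcS, h2⟩]
        · rw [hset, hTeq]
          ext z; simp only [Set.mem_insert_iff, Set.mem_singleton_iff]; tauto
    calc {T : Set (Fin 2 → ℝ) | T ⊆ S ∧ IsUnitTriangle T ∧ (T ∩ L).ncard = 2}.ncard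
        ≤ (gone p d '' ((S \ L) ×ˢ (S ∩ L))).ncard :=
          Set.ncard_le_ncard hsub (((hfinD.prod hfinI)).image _)
      _ ≤ ((S \ L) ×ˢ (S ∩ L)).ncard := Set.ncard_image_le (hfinD.prod hfinI)
      _ = (S \ L).ncard * (S ∩ L).ncard := ncard_sprod _ _
      _ = ℓ * x := by rw [hxval, hl]; ring
  · -- one vertex on L
    have hsub : {T : Set (Fin 2 → ℝ) | T ⊆ S ∧ IsUnitTriangle T ∧ (T ∩ L).ncard = 1}
        ⊆ gtwo p d '' ((S \ L) ×ˢ S) := by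
      rintro T ⟨hTS, ⟨a, b, c, hab, hac, hbc, hTeq, harea'⟩, hcard⟩
      have harea : |det2 (b - a) (c - a)| = 2 := by linarith
      rw [hTeq] at hTS hcard
      have haS : a ∈ S := hTS (by simp)
      have hbS : b ∈ S := hTS (by simp)
      have hcS : c ∈ S := hTS (by simp)
      rcases pattern1 hab hac hbc hcard with ⟨h1, h2, h3⟩ | ⟨h1, h2, h3⟩ | ⟨h1, h2, h3⟩
      · obtain ⟨u, v, huor, hvor, hset⟩ := case1_exists p d hd L hLiff a b c h1 h2 h3 hbc harea
        refine ⟨(u, v), ⟨?_, ?_⟩, ?_⟩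
        · rcases huor with rfl | rfl
          exacts [⟨hbS, h2⟩, ⟨hcS, h3⟩]
        · rcases hvor with rfl | rfl | rfl
          exacts [hbS, hcS, haS]
        · rw [hset, hTeq]
      · -- b ∈ L only
        have harea2 : |det2 (a - b) (c - b)| = 2 := by
          rw [show det2 (a - b) (c - b) = -det2 (b - a) (c - a) by
            simp only [det2, Pi.sub_apply]; ring, abs_neg]
          exact harea
        obtain ⟨u, v, huor, hvor, hset⟩ := case1_exists p d hd L hLiff b a c h1 h2 h3 hac harea2
        refine ⟨(u, v), ⟨?_, ?_⟩, ?_⟩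
        · rcases huor with rfl | rfl
          exacts [⟨haS, h2⟩, ⟨hcS, h3⟩]
        · rcases hvor with rfl | rfl | rfl
          exacts [haS, hcS, hbS]
        · rw [hset, hTeq]
          ext z; simp only [Set.mem_insert_iff, Set.mem_singleton_iff]; tauto
      · -- c ∈ L only
        have harea2 : |det2 (a - c) (b - c)| = 2 := by
          rw [show det2 (a - c) (b - c) = det2 (b - a) (c - a) by
            simp only [det2, Pi.sub_apply]; ring]
          exact harea
        obtain ⟨u, v, huor, hvor, hset⟩ := case1_exists p d hd L hLiff c a b h1 h2 h3 hab harea2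
        refine ⟨(u, v), ⟨?_, ?_⟩, ?_⟩
        · rcases huor with rfl | rfl
          exacts [⟨haS, h2⟩, ⟨hbS, h3⟩]
        · rcases hvor with rfl | rfl | rfl
          exacts [haS, hbS, hcS]
        · rw [hset, hTeq]
          ext z; simp only [Set.mem_insert_iff, Set.mem_singleton_iff]; tauto
    calc {T : Set (Fin 2 → ℝ) | T ⊆ S ∧ IsUnitTriangle T ∧ (T ∩ L).ncard = 1}.ncard
        ≤ (gtwo p d '' ((S \ L) ×ˢ S)).ncard :=
          Set.ncard_le_ncard hsub (((hfinD.prod hS)).image _)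
      _ ≤ ((S \ L) ×ˢ S).ncard := Set.ncard_image_le (hfinD.prod hS)
      _ = (S \ L).ncard * S.ncard := ncard_sprod _ _
      _ = x * n := by rw [hxval, hn]
      _ = x ^ 2 + ℓ * x := by rw [show n = ℓ + x by omega]; ring
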